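/- (Product Rule) Assume that at t ∈ I both hypotheses H1+ and H1− hold (for all sufficiently small ε > 0 each of the equations p(t,h) = t + ε and p(t,h) = t − ε has a solution h = h(t,ε) with h(t,ε) → 0 as ε → 0⁺) and that the map h ↦ p(t,h) is continuous at h = 0. If f and g are both p-differentiable at t, then their product f·g is p-differentiable at t and D_p(f·g)(t) = f(t)·D_p g(t) + g(t)·D_p f(t). -/

import Mathlib

open Filter Topology Set

/-- **Product Rule.** Assume `H1⁺` and `H1⁻` hold at `t` and `h ↦ p t h`
is continuous at `h = 0`. If `f` and `g` are both `p`-differentiable at `t`, with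
`D_p f (t) = Lf` and `D_p g (t) = Lg`, then the product `f·g` is `p`-differentiable at `t`
and `D_p (f·g) (t) = f t · D_p g (t) + g t · D_p f (t)`. -/
theorem p_derivative_product_rule
    (p : ℝ → ℝ → ℝ) (f g : ℝ → ℝ) (t Lf Lg : ℝ) (hsolp hsolm : ℝ → ℝ)
    (hH1p : ∀ᶠ ε in 𝓝[>] (0 : ℝ), p t (hsolp ε) = t + ε)
    (hsolp0 : Tendsto hsolp (𝓝[>] (0 : ℝ)) (𝓝 0))
    (hH1m : ∀ᶠ ε in 𝓝[>] (0 : ℝ), p t (hsolm ε) = t - ε)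
    (hsolm0 : Tendsto hsolm (𝓝[>] (0 : ℝ)) (𝓝 0))
    (hpcont : ContinuousAt (fun h => p t h) 0)
    (hf : Tendsto (fun h => (f (p t h) - f t) / h) (𝓝[≠] (0 : ℝ)) (𝓝 Lf))
    (hg : Tendsto (fun h => (g (p t h) - g t) / h) (𝓝[≠] (0 : ℝ)) (𝓝 Lg)) :
    Tendsto (fun h => ((f * g) (p t h) - (f * g) t) / h) (𝓝[≠] (0 : ℝ))
      (𝓝 (f t * Lg + g t * Lf)) := by
  have hid : Tendsto (fun h : ℝ => h) (𝓝[≠] (0:ℝ)) (𝓝 0) :=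
    tendsto_id.mono_left nhdsWithin_le_nhds
  have hfp : Tendsto (fun h => f (p t h)) (𝓝[≠] (0:ℝ)) (𝓝 (f t)) := by
    have h1 : Tendsto (fun h => (f (p t h) - f t) / h * h + f t) (𝓝[≠] (0:ℝ))
        (𝓝 (Lf * 0 + f t)) := ((hf.mul hid).add tendsto_const_nhds)
    rw [mul_zero, zero_add] at h1
    refine h1.congr' ?_
    filter_upwards [self_mem_nhdsWithin] with h (hne : h ≠ 0)
    field_simp
    ring
  have hmain : Tendsto (fun h => f (p t h) * ((g (p t h) - g t) / h)
      + g t * ((f (p t h) - f t) / h)) (𝓝[≠] (0:ℝ)) (𝓝 (f t * Lg + g t * Lf)) :=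
    (hfp.mul hg).add (tendsto_const_nhds.mul hf)
  refine hmain.congr' ?_
  filter_upwards [self_mem_nhdsWithin] with h (hne : h ≠ 0)
  simp only [Pi.mul_apply]
  field_simp
  ring
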